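/- For r = 3, a triple (I,J,K) ∈ T̃ⁿ₃ is TT-irreducible if and only if I = J = K = {m, m+ℓ, n} for some integers ℓ, m with 1 ≤ ℓ ≤ m and 2m + ℓ = n. -/

import Mathlib

namespace Paper

/-- The `f`-th smallest element of the finset `I` (1-indexed), with the convention
`elem I 0 = 0`. -/
def elem (I : Finset ℕ) (f : ℕ) : ℕ :=
  if f = 0 then 0 else (I.sort (· ≤ ·)).getD (f - 1) 0

/-- A Littlewood–Richardson filling of `ν\λ` according to `μ`, for partitions `λ, μ, ν`
with at most `r` parts (1-indexed): nonnegative integers `(f k ℓ)_{1 ≤ k ≤ ℓ ≤ r}`, where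
`f k ℓ` is the number of `k`'s in row `ℓ`, subject to the row-sum, content, shape and
lattice-word conditions. -/
def IsFilling (r : ℕ) (lam mu nu : ℕ → ℕ) (f : ℕ → ℕ → ℕ) : Prop :=
  (∀ k ℓ : ℕ, (k < 1 ∨ ℓ < k ∨ r < ℓ) → f k ℓ = 0) ∧
  (∀ ℓ, 1 ≤ ℓ → ℓ ≤ r → lam ℓ + ∑ k ∈ Finset.Icc 1 ℓ, f k ℓ = nu ℓ) ∧
  (∀ k, 1 ≤ k → k ≤ r → (∑ ℓ ∈ Finset.Icc k r, f k ℓ) = mu k) ∧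
  (∀ p ℓ : ℕ, p < ℓ → ℓ < r →
    lam (ℓ + 1) + ∑ k ∈ Finset.Icc 1 (p + 1), f k (ℓ + 1) ≤
      lam ℓ + ∑ k ∈ Finset.Icc 1 p, f k ℓ) ∧
  (∀ k p : ℕ, 1 ≤ k → k ≤ p → p < r →
    (∑ ℓ ∈ Finset.Icc (k + 1) (p + 1), f (k + 1) ℓ) ≤ ∑ ℓ ∈ Finset.Icc k p, f k ℓ)

/-- The Littlewood–Richardson coefficient `c^ν_{λ,μ}`: the number of Littlewood–Richardson
fillings of `ν\λ` according to `μ`. -/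
noncomputable def LRcoeff (r : ℕ) (lam mu nu : ℕ → ℕ) : ℕ :=
  Nat.card {f : ℕ → ℕ → ℕ // IsFilling r lam mu nu f}

/-- `λ = ρ_r(σₙ(I))`: the `p`-th part is `n − r + p − i_p`. -/
def lamOf (n r : ℕ) (I : Finset ℕ) (p : ℕ) : ℕ :=
  if 1 ≤ p ∧ p ≤ r then n + p - r - elem I p else 0

/-- `ν = ρ_r(K)`: the `p`-th part is `k_{r+1−p} − (r+1−p)`. -/
def nuOf (r : ℕ) (K : Finset ℕ) (p : ℕ) : ℕ :=
  if 1 ≤ p ∧ p ≤ r then elem K (r + 1 - p) - (r + 1 - p) else 0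

/-- The Littlewood–Richardson coefficient `c⁽ⁿ⁾(I,J,K)` of a triple of `r`-element subsets of
`{1,…,n}`, namely `c^ν_{λ,μ}` with `λ = ρ_r(σₙ(I))`, `μ = ρ_r(σₙ(J))`, `ν = ρ_r(K)`. -/
noncomputable def cIJK (n : ℕ) (I J K : Finset ℕ) : ℕ :=
  LRcoeff I.card (lamOf n I.card I) (lamOf n I.card J) (nuOf I.card K)

/-- The set `Ũⁿ_r` of triples of `r`-subsets of `{1,…,n}` whose total element sum is
`r(4n−r+3)/2`. -/
def Utilde (n r : ℕ) : Set (Finset ℕ × Finset ℕ × Finset ℕ) :=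
  {t | t.1 ⊆ Finset.Icc 1 n ∧ t.2.1 ⊆ Finset.Icc 1 n ∧ t.2.2 ⊆ Finset.Icc 1 n ∧
       t.1.card = r ∧ t.2.1.card = r ∧ t.2.2.card = r ∧
       2 * ((∑ i ∈ t.1, i) + (∑ j ∈ t.2.1, j) + (∑ k ∈ t.2.2, k)) = r * (4 * n - r + 3)}

/-- Fuel-based auxiliary recursion for the symmetrized Horn sets `T̃ⁿ_r`. -/
def TtildeAux : ℕ → ℕ → ℕ → Set (Finset ℕ × Finset ℕ × Finset ℕ)
  | 0, n, r => Utilde n r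
  | fuel + 1, n, r =>
    {t ∈ Utilde n r | ∀ p : ℕ, 0 < p → p < r → ∀ s ∈ TtildeAux fuel r p,
      p * (4 * n - p + 3) ≤
        2 * ((∑ x ∈ s.1, elem t.1 x) + (∑ x ∈ s.2.1, elem t.2.1 x) +
             (∑ x ∈ s.2.2, elem t.2.2 x))}

/-- The symmetrized Horn set `T̃ⁿ_r`. -/
def Ttilde (n r : ℕ) : Set (Finset ℕ × Finset ℕ × Finset ℕ) := TtildeAux r n r

/-- The triple `(I,J,K)` is TT-reducible: there are `u,v,w ∈ {0,…,r}` with `u+v+w = r`,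
the gap conditions (`u = r` or `i_{u+1} − i_u ≥ 2`, etc.), and `i_u + j_v + k_w ≤ n − 1`
(with `i₀ = j₀ = k₀ = 0`). -/
def TTReducible (n r : ℕ) (t : Finset ℕ × Finset ℕ × Finset ℕ) : Prop :=
  ∃ u v w : ℕ, u ≤ r ∧ v ≤ r ∧ w ≤ r ∧ u + v + w = r ∧
    (u = r ∨ elem t.1 u + 2 ≤ elem t.1 (u + 1)) ∧
    (v = r ∨ elem t.2.1 v + 2 ≤ elem t.2.1 (v + 1)) ∧
    (w = r ∨ elem t.2.2 w + 2 ≤ elem t.2.2 (w + 1)) ∧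
    elem t.1 u + elem t.2.1 v + elem t.2.2 w ≤ n - 1

lemma sort_pair {a b : ℕ} (h1 : a < b) :
    ({a, b} : Finset ℕ).sort (· ≤ ·) = [a, b] := by
  have hperm : List.Perm (({a, b} : Finset ℕ).sort (· ≤ ·)) [a, b] := by
    apply List.perm_of_nodup_nodup_toFinset_eq (Finset.sort_nodup _ _)
    · simp; omega
    · simp [Finset.sort_toFinset]
  exact List.Perm.eq_of_pairwise' (Finset.pairwise_sort _ _) (by simp [List.Pairwise]; omega) hperm

lemma sort_triple {a b c : ℕ} (h1 : a < b) (h2 : b < c) :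
    ({a, b, c} : Finset ℕ).sort (· ≤ ·) = [a, b, c] := by
  have hperm : List.Perm (({a, b, c} : Finset ℕ).sort (· ≤ ·)) [a, b, c] := by
    apply List.perm_of_nodup_nodup_toFinset_eq (Finset.sort_nodup _ _)
    · simp; omega
    · simp [Finset.sort_toFinset]
  exact List.Perm.eq_of_pairwise' (Finset.pairwise_sort _ _) (by simp [List.Pairwise]; omega) hperm

lemma elem_zero (I : Finset ℕ) : elem I 0 = 0 := rfl
lemma elem_p1 {a b : ℕ} (h1 : a < b) : elem {a,b} 1 = a := by simp [elem, sort_pair h1]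
lemma elem_p2 {a b : ℕ} (h1 : a < b) : elem {a,b} 2 = b := by simp [elem, sort_pair h1]
lemma elem_t1 {a b c : ℕ} (h1 : a < b) (h2 : b < c) : elem {a,b,c} 1 = a := by
  simp [elem, sort_triple h1 h2]
lemma elem_t2 {a b c : ℕ} (h1 : a < b) (h2 : b < c) : elem {a,b,c} 2 = b := by
  simp [elem, sort_triple h1 h2]
lemma elem_t3 {a b c : ℕ} (h1 : a < b) (h2 : b < c) : elem {a,b,c} 3 = c := by
  simp [elem, sort_triple h1 h2]
lemma elem_t4 {a b c : ℕ} (h1 : a < b) (h2 : b < c) : elem {a,b,c} 4 = 0 := by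
  simp [elem, sort_triple h1 h2]

lemma triple_eq {x y z a b c : ℕ}
    (h : ∀ t, (t = x ∨ t = y ∨ t = z) ↔ (t = a ∨ t = b ∨ t = c)) :
    ({x, y, z} : Finset ℕ) = {a, b, c} := by
  ext t; simp [h]

lemma exists_sorted_three (I : Finset ℕ) (h : I.card = 3) :
    ∃ a b c, a < b ∧ b < c ∧ I = {a, b, c} := by
  obtain ⟨x, y, z, hxy, hxz, hyz, rfl⟩ := Finset.card_eq_three.mp h
  rcases lt_trichotomy x y with h1 | h1 | h1
  · rcases lt_trichotomy y z with h2 | h2 | h2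
    · exact ⟨x, y, z, h1, h2, rfl⟩
    · exact absurd h2 hyz
    · rcases lt_trichotomy x z with h3 | h3 | h3
      · exact ⟨x, z, y, h3, h2, triple_eq fun t => by tauto⟩
      · exact absurd h3 hxz
      · exact ⟨z, x, y, h3, h1, triple_eq fun t => by tauto⟩
  · exact absurd h1 hxy
  · rcases lt_trichotomy x z with h3 | h3 | h3
    · exact ⟨y, x, z, h1, h3, triple_eq fun t => by tauto⟩
    · exact absurd h3 hxz
    · rcases lt_trichotomy y z with h2 | h2 | h2
      · exact ⟨y, z, x, h2, h3, triple_eq fun t => by tauto⟩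
      · exact absurd h2 hyz
      · exact ⟨z, y, x, h2, h1, triple_eq fun t => by tauto⟩

lemma sum_triple {a b c : ℕ} (h1 : a < b) (h2 : b < c) :
    ∑ i ∈ ({a, b, c} : Finset ℕ), i = a + b + c := by
  rw [Finset.sum_insert (by simp; omega), Finset.sum_insert (by simp; omega),
    Finset.sum_singleton]; omega

lemma mem_T231 (s : Finset ℕ × Finset ℕ × Finset ℕ) (h1 : s ∈ Utilde 3 1) :
    s ∈ TtildeAux 2 3 1 :=
  ⟨h1, fun _ hp hp' _ _ => by omega⟩

lemma mem_T232 (s : Finset ℕ × Finset ℕ × Finset ℕ) (h1 : s ∈ Utilde 3 2)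
    (h2 : ∀ a b c : ℕ, 1 ≤ a → a ≤ 2 → 1 ≤ b → b ≤ 2 → 1 ≤ c → c ≤ 2 → a + b + c = 5 →
      14 ≤ 2 * (elem s.1 a + elem s.2.1 b + elem s.2.2 c)) :
    s ∈ TtildeAux 2 3 2 := by
  refine ⟨h1, ?_⟩
  intro p hp hp' s' hs'
  obtain rfl : p = 1 := by omega
  obtain ⟨hA, hB, hC, hcA, hcB, hcC, hsum⟩ := hs'.1
  obtain ⟨a, ha⟩ := Finset.card_eq_one.mp hcA
  obtain ⟨b, hb⟩ := Finset.card_eq_one.mp hcB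
  obtain ⟨c, hc⟩ := Finset.card_eq_one.mp hcC
  rw [ha] at hA hsum; rw [hb] at hB hsum; rw [hc] at hC hsum
  have ha' := Finset.mem_Icc.mp (hA (Finset.mem_singleton_self a))
  have hb' := Finset.mem_Icc.mp (hB (Finset.mem_singleton_self b))
  have hc' := Finset.mem_Icc.mp (hC (Finset.mem_singleton_self c))
  simp only [Finset.sum_singleton] at hsum
  rw [ha, hb, hc]
  simp only [Finset.sum_singleton]
  exact h2 a b c ha'.1 ha'.2 hb'.1 hb'.2 hc'.1 hc'.2 (by omega)


lemma elem13_1 : elem ({1,3} : Finset ℕ) 1 = 1 := elem_p1 (by norm_num)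
lemma elem13_2 : elem ({1,3} : Finset ℕ) 2 = 3 := elem_p2 (by norm_num)
lemma elem23_1 : elem ({2,3} : Finset ℕ) 1 = 2 := elem_p1 (by norm_num)
lemma elem23_2 : elem ({2,3} : Finset ℕ) 2 = 3 := elem_p2 (by norm_num)

lemma memB1 : (({1,3},{1,3},{2,3}) : Finset ℕ × Finset ℕ × Finset ℕ) ∈ TtildeAux 2 3 2 := by
  refine mem_T232 _ (by refine ⟨?_,?_,?_,?_,?_,?_,?_⟩ <;> decide) ?_
  intro a b c h1 h2 h3 h4 h5 h6 h7
  interval_cases a <;> interval_cases b <;> interval_cases c <;>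
    simp only [elem13_1, elem13_2, elem23_1, elem23_2] <;> omega

lemma memB2 : (({1,3},{2,3},{1,3}) : Finset ℕ × Finset ℕ × Finset ℕ) ∈ TtildeAux 2 3 2 := by
  refine mem_T232 _ (by refine ⟨?_,?_,?_,?_,?_,?_,?_⟩ <;> decide) ?_
  intro a b c h1 h2 h3 h4 h5 h6 h7
  interval_cases a <;> interval_cases b <;> interval_cases c <;>
    simp only [elem13_1, elem13_2, elem23_1, elem23_2] <;> omega

lemma memB3 : (({2,3},{1,3},{1,3}) : Finset ℕ × Finset ℕ × Finset ℕ) ∈ TtildeAux 2 3 2 := by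
  refine mem_T232 _ (by refine ⟨?_,?_,?_,?_,?_,?_,?_⟩ <;> decide) ?_
  intro a b c h1 h2 h3 h4 h5 h6 h7
  interval_cases a <;> interval_cases b <;> interval_cases c <;>
    simp only [elem13_1, elem13_2, elem23_1, elem23_2] <;> omega


/-- `E3 a b c` : the 1-indexed element function of an abstract sorted triple. -/
def E3 (a b c : ℕ) : ℕ → ℕ
  | 0 => 0
  | 1 => a
  | 2 => b
  | 3 => c
  | _ + 4 => 0

lemma E3_0 {a b c : ℕ} : E3 a b c 0 = 0 := rfl
lemma E3_1 {a b c : ℕ} : E3 a b c 1 = a := rfl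
lemma E3_2 {a b c : ℕ} : E3 a b c 2 = b := rfl
lemma E3_3 {a b c : ℕ} : E3 a b c 3 = c := rfl
lemma E3_4 {a b c : ℕ} : E3 a b c 4 = 0 := rfl

/-- The purely arithmetic core of the forward direction. -/
lemma forward_arith (n i1 i2 i3 j1 j2 j3 k1 k2 k3 : ℕ) (hn : 3 ≤ n)
    (o1 : i1 < i2) (o2 : i2 < i3) (o3 : j1 < j2) (o4 : j2 < j3)
    (o5 : k1 < k2) (o6 : k2 < k3)
    (l1 : 1 ≤ i1) (u1 : i3 ≤ n) (l2 : 1 ≤ j1) (u2 : j3 ≤ n)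
    (l3 : 1 ≤ k1) (u3 : k3 ≤ n)
    (hS : i1 + i2 + i3 + (j1 + j2 + j3) + (k1 + k2 + k3) = 6 * n)
    (hC1 : 2 * n + 1 ≤ i1 + j3 + k3) (hC2 : 2 * n + 1 ≤ i3 + j1 + k3)
    (hC3 : 2 * n + 1 ≤ i3 + j3 + k1) (hC4 : 2 * n + 1 ≤ i2 + j2 + k3)
    (hC5 : 2 * n + 1 ≤ i2 + j3 + k2) (hC6 : 2 * n + 1 ≤ i3 + j2 + k2)
    (hB1 : 4 * n + 1 ≤ i1 + i3 + (j1 + j3) + (k2 + k3))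
    (hB2 : 4 * n + 1 ≤ i1 + i3 + (j2 + j3) + (k1 + k3))
    (hB3 : 4 * n + 1 ≤ i2 + i3 + (j1 + j3) + (k1 + k3))
    (hred : ∀ u v w : ℕ, u ≤ 3 → v ≤ 3 → w ≤ 3 → u + v + w = 3 →
      (u = 3 ∨ E3 i1 i2 i3 u + 2 ≤ E3 i1 i2 i3 (u + 1)) →
      (v = 3 ∨ E3 j1 j2 j3 v + 2 ≤ E3 j1 j2 j3 (v + 1)) →
      (w = 3 ∨ E3 k1 k2 k3 w + 2 ≤ E3 k1 k2 k3 (w + 1)) →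
      E3 i1 i2 i3 u + E3 j1 j2 j3 v + E3 k1 k2 k3 w ≤ n - 1 → False) :
    ∃ m l : ℕ, 1 ≤ l ∧ l ≤ m ∧ 2 * m + l = n ∧
      i1 = m ∧ i2 = m + l ∧ i3 = n ∧ j1 = m ∧ j2 = m + l ∧ j3 = n ∧
      k1 = m ∧ k2 = m + l ∧ k3 = n := by
  have hi3n : i3 = n := by
    by_contra hne
    have hjk : j1 = 1 ∨ k1 = 1 := by
      by_contra hc; push_neg at hc
      refine hred 3 0 0 (by norm_num) (by norm_num) (by norm_num) (by norm_num)
        (Or.inl rfl)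
        (Or.inr (by rw [E3_0, E3_1]; clear * - hc l2; omega))
        (Or.inr (by rw [E3_0, E3_1]; clear * - hc l3; omega))
        (by rw [E3_3, E3_0, E3_0]; clear * - hne u1 hn; omega)
    rcases hjk with h1 | h1
    · clear * - h1 hC2 u3 u1 hne; omega
    · clear * - h1 hC3 u2 u1 hne; omega
  have hj3n : j3 = n := by
    by_contra hne
    have hjk : i1 = 1 ∨ k1 = 1 := by
      by_contra hc; push_neg at hc
      refine hred 0 3 0 (by norm_num) (by norm_num) (by norm_num) (by norm_num)
        (Or.inr (by rw [E3_0, E3_1]; clear * - hc l1; omega))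
        (Or.inl rfl)
        (Or.inr (by rw [E3_0, E3_1]; clear * - hc l3; omega))
        (by rw [E3_3, E3_0, E3_0]; clear * - hne u2 hn; omega)
    rcases hjk with h1 | h1
    · clear * - h1 hC1 u3 u2 hne; omega
    · clear * - h1 hC3 u1 u2 hne; omega
  have hk3n : k3 = n := by
    by_contra hne
    have hjk : i1 = 1 ∨ j1 = 1 := by
      by_contra hc; push_neg at hc
      refine hred 0 0 3 (by norm_num) (by norm_num) (by norm_num) (by norm_num)
        (Or.inr (by rw [E3_0, E3_1]; clear * - hc l1; omega))
        (Or.inr (by rw [E3_0, E3_1]; clear * - hc l2; omega))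
        (Or.inl rfl)
        (by rw [E3_3, E3_0, E3_0]; clear * - hne u3 hn; omega)
    rcases hjk with h1 | h1
    · clear * - h1 hC1 u2 u3 hne; omega
    · clear * - h1 hC2 u1 u3 hne; omega
  have hX1 : n ≤ i2 + j1 := by
    by_contra hlt; push_neg at hlt
    exact hred 2 1 0 (by norm_num) (by norm_num) (by norm_num) (by norm_num)
      (Or.inr (by rw [E3_2, E3_3]; clear * - hi3n hj3n hk3n hlt l2; omega))
      (Or.inr (by rw [E3_1, E3_2]; clear * - hi3n hj3n hk3n hC4 hlt u1; omega))
      (Or.inr (by rw [E3_0, E3_1]; clear * - hi3n hj3n hk3n hB3 hlt u1 u2 u3; omega))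
      (by rw [E3_2, E3_1, E3_0]; clear * - hi3n hj3n hk3n hlt hn; omega)
  have hX2 : n ≤ i2 + k1 := by
    by_contra hlt; push_neg at hlt
    exact hred 2 0 1 (by norm_num) (by norm_num) (by norm_num) (by norm_num)
      (Or.inr (by rw [E3_2, E3_3]; clear * - hi3n hj3n hk3n hlt l3; omega))
      (Or.inr (by rw [E3_0, E3_1]; clear * - hi3n hj3n hk3n hB3 hlt u1 u2 u3; omega))
      (Or.inr (by rw [E3_1, E3_2]; clear * - hi3n hj3n hk3n hC5 hlt u2; omega))
      (by rw [E3_2, E3_0, E3_1]; clear * - hi3n hj3n hk3n hlt hn; omega)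
  have hX3 : n ≤ i1 + j2 := by
    by_contra hlt; push_neg at hlt
    exact hred 1 2 0 (by norm_num) (by norm_num) (by norm_num) (by norm_num)
      (Or.inr (by rw [E3_1, E3_2]; clear * - hi3n hj3n hk3n hC4 hlt u3; omega))
      (Or.inr (by rw [E3_2, E3_3]; clear * - hi3n hj3n hk3n hlt l1; omega))
      (Or.inr (by rw [E3_0, E3_1]; clear * - hi3n hj3n hk3n hB2 hlt u1 u2 u3; omega))
      (by rw [E3_1, E3_2, E3_0]; clear * - hi3n hj3n hk3n hlt hn; omega)
  have hX4 : n ≤ j2 + k1 := by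
    by_contra hlt; push_neg at hlt
    exact hred 0 2 1 (by norm_num) (by norm_num) (by norm_num) (by norm_num)
      (Or.inr (by rw [E3_0, E3_1]; clear * - hi3n hj3n hk3n hB2 hlt u1 u2 u3; omega))
      (Or.inr (by rw [E3_2, E3_3]; clear * - hi3n hj3n hk3n hlt l3; omega))
      (Or.inr (by rw [E3_1, E3_2]; clear * - hi3n hj3n hk3n hC6 hlt u1; omega))
      (by rw [E3_0, E3_2, E3_1]; clear * - hi3n hj3n hk3n hlt hn; omega)
  have hX5 : n ≤ i1 + k2 := by
    by_contra hlt; push_neg at hlt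
    exact hred 1 0 2 (by norm_num) (by norm_num) (by norm_num) (by norm_num)
      (Or.inr (by rw [E3_1, E3_2]; clear * - hi3n hj3n hk3n hC5 hlt u2; omega))
      (Or.inr (by rw [E3_0, E3_1]; clear * - hi3n hj3n hk3n hB1 hlt u1 u2 u3; omega))
      (Or.inr (by rw [E3_2, E3_3]; clear * - hi3n hj3n hk3n hlt l1; omega))
      (by rw [E3_1, E3_0, E3_2]; clear * - hi3n hj3n hk3n hlt hn; omega)
  have hX6 : n ≤ j1 + k2 := by
    by_contra hlt; push_neg at hlt
    exact hred 0 1 2 (by norm_num) (by norm_num) (by norm_num) (by norm_num)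
      (Or.inr (by rw [E3_0, E3_1]; clear * - hi3n hj3n hk3n hB1 hlt u1 u2 u3; omega))
      (Or.inr (by rw [E3_1, E3_2]; clear * - hi3n hj3n hk3n hC6 hlt u1; omega))
      (Or.inr (by rw [E3_2, E3_3]; clear * - hi3n hj3n hk3n hlt l2; omega))
      (by rw [E3_0, E3_1, E3_2]; clear * - hi3n hj3n hk3n hlt hn; omega)
  have heq : j1 = i1 ∧ k1 = i1 ∧ j2 = i2 ∧ k2 = i2 ∧ i1 + i2 = n := by
    clear * - hi3n hj3n hk3n hX1 hX2 hX3 hX4 hX5 hX6 hS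
    omega
  have hll : i2 ≤ i1 + 1 ∨ n ≤ i1 + i1 + i1 := by
    by_contra hc; push_neg at hc
    exact hred 1 1 1 (by norm_num) (by norm_num) (by norm_num) (by norm_num)
      (Or.inr (by rw [E3_1, E3_2]; clear * - hi3n hj3n hk3n hc; omega))
      (Or.inr (by rw [E3_1, E3_2]; clear * - hi3n hj3n hk3n hc heq; omega))
      (Or.inr (by rw [E3_1, E3_2]; clear * - hi3n hj3n hk3n hc heq; omega))
      (by rw [E3_1, E3_1, E3_1]; clear * - hi3n hj3n hk3n hc heq hn; omega)
  refine ⟨i1, i2 - i1, ?_, ?_, ?_, rfl, ?_, ?_, ?_, ?_, ?_, ?_, ?_, ?_⟩ <;>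
    (clear * - hi3n hj3n hk3n heq hll o1 l1 hn; omega)

end Paper

open Paper

/-- For `r = 3`: a triple `(I,J,K) ∈ T̃ⁿ₃` is TT-irreducible if and only if
`I = J = K = {m, m+ℓ, n}` for some integers `ℓ, m` with `1 ≤ ℓ ≤ m` and `2m + ℓ = n`. -/
theorem irreducible_r3_characterization (n : ℕ) (hn : 3 ≤ n)
    (t : Finset ℕ × Finset ℕ × Finset ℕ) (ht : t ∈ Paper.Ttilde n 3) :
    ¬ Paper.TTReducible n 3 t ↔
      ∃ m ℓ : ℕ, 1 ≤ ℓ ∧ ℓ ≤ m ∧ 2 * m + ℓ = n ∧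
        t.1 = ({m, m + ℓ, n} : Finset ℕ) ∧
        t.2.1 = ({m, m + ℓ, n} : Finset ℕ) ∧
        t.2.2 = ({m, m + ℓ, n} : Finset ℕ) := by
  obtain ⟨I, J, K⟩ := t
  obtain ⟨htU, htH⟩ := ht
  obtain ⟨hIs, hJs, hKs, hIc, hJc, hKc, hsum⟩ := htU
  obtain ⟨i1, i2, i3, hi12, hi23, hIeq⟩ := exists_sorted_three I hIc
  obtain ⟨j1, j2, j3, hj12, hj23, hJeq⟩ := exists_sorted_three J hJc
  obtain ⟨k1, k2, k3, hk12, hk23, hKeq⟩ := exists_sorted_three K hKc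
  have eI : ∀ p, p ≤ 4 → elem I p = E3 i1 i2 i3 p := by
    intro p hp; interval_cases p
    · rfl
    · rw [hIeq, E3_1]; exact elem_t1 hi12 hi23
    · rw [hIeq, E3_2]; exact elem_t2 hi12 hi23
    · rw [hIeq, E3_3]; exact elem_t3 hi12 hi23
    · rw [hIeq, E3_4]; exact elem_t4 hi12 hi23
  have eJ : ∀ p, p ≤ 4 → elem J p = E3 j1 j2 j3 p := by
    intro p hp; interval_cases p
    · rfl
    · rw [hJeq, E3_1]; exact elem_t1 hj12 hj23
    · rw [hJeq, E3_2]; exact elem_t2 hj12 hj23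
    · rw [hJeq, E3_3]; exact elem_t3 hj12 hj23
    · rw [hJeq, E3_4]; exact elem_t4 hj12 hj23
  have eK : ∀ p, p ≤ 4 → elem K p = E3 k1 k2 k3 p := by
    intro p hp; interval_cases p
    · rfl
    · rw [hKeq, E3_1]; exact elem_t1 hk12 hk23
    · rw [hKeq, E3_2]; exact elem_t2 hk12 hk23
    · rw [hKeq, E3_3]; exact elem_t3 hk12 hk23
    · rw [hKeq, E3_4]; exact elem_t4 hk12 hk23
  constructor
  · -- irreducible → explicit form
    intro hirr
    have bi1 : 1 ≤ i1 ∧ i1 ≤ n := Finset.mem_Icc.mp (hIs (by rw [hIeq]; simp))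
    have bi3 : 1 ≤ i3 ∧ i3 ≤ n := Finset.mem_Icc.mp (hIs (by rw [hIeq]; simp))
    have bj1 : 1 ≤ j1 ∧ j1 ≤ n := Finset.mem_Icc.mp (hJs (by rw [hJeq]; simp))
    have bj3 : 1 ≤ j3 ∧ j3 ≤ n := Finset.mem_Icc.mp (hJs (by rw [hJeq]; simp))
    have bk1 : 1 ≤ k1 ∧ k1 ≤ n := Finset.mem_Icc.mp (hKs (by rw [hKeq]; simp))
    have bk3 : 1 ≤ k3 ∧ k3 ≤ n := Finset.mem_Icc.mp (hKs (by rw [hKeq]; simp))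
    have hS : i1 + i2 + i3 + (j1 + j2 + j3) + (k1 + k2 + k3) = 6 * n := by
      rw [hIeq, hJeq, hKeq] at hsum
      rw [sum_triple hi12 hi23, sum_triple hj12 hj23, sum_triple hk12 hk23] at hsum
      clear * - hsum hn
      omega
    have hC1 : 2 * n + 1 ≤ i1 + j3 + k3 := by
      have h := htH 1 one_pos (by norm_num) ({1},{3},{3})
        (mem_T231 _ (by refine ⟨?_,?_,?_,?_,?_,?_,?_⟩ <;> decide))
      simp only [Finset.sum_singleton] at h
      rw [eI 1 (by norm_num), eJ 3 (by norm_num), eK 3 (by norm_num), E3_1, E3_3, E3_3] at h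
      clear * - h hn; omega
    have hC2 : 2 * n + 1 ≤ i3 + j1 + k3 := by
      have h := htH 1 one_pos (by norm_num) ({3},{1},{3})
        (mem_T231 _ (by refine ⟨?_,?_,?_,?_,?_,?_,?_⟩ <;> decide))
      simp only [Finset.sum_singleton] at h
      rw [eI 3 (by norm_num), eJ 1 (by norm_num), eK 3 (by norm_num), E3_3, E3_1, E3_3] at h
      clear * - h hn; omega
    have hC3 : 2 * n + 1 ≤ i3 + j3 + k1 := by
      have h := htH 1 one_pos (by norm_num) ({3},{3},{1})
        (mem_T231 _ (by refine ⟨?_,?_,?_,?_,?_,?_,?_⟩ <;> decide))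
      simp only [Finset.sum_singleton] at h
      rw [eI 3 (by norm_num), eJ 3 (by norm_num), eK 1 (by norm_num), E3_3, E3_3, E3_1] at h
      clear * - h hn; omega
    have hC4 : 2 * n + 1 ≤ i2 + j2 + k3 := by
      have h := htH 1 one_pos (by norm_num) ({2},{2},{3})
        (mem_T231 _ (by refine ⟨?_,?_,?_,?_,?_,?_,?_⟩ <;> decide))
      simp only [Finset.sum_singleton] at h
      rw [eI 2 (by norm_num), eJ 2 (by norm_num), eK 3 (by norm_num), E3_2, E3_2, E3_3] at h
      clear * - h hn; omega
    have hC5 : 2 * n + 1 ≤ i2 + j3 + k2 := by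
      have h := htH 1 one_pos (by norm_num) ({2},{3},{2})
        (mem_T231 _ (by refine ⟨?_,?_,?_,?_,?_,?_,?_⟩ <;> decide))
      simp only [Finset.sum_singleton] at h
      rw [eI 2 (by norm_num), eJ 3 (by norm_num), eK 2 (by norm_num), E3_2, E3_3, E3_2] at h
      clear * - h hn; omega
    have hC6 : 2 * n + 1 ≤ i3 + j2 + k2 := by
      have h := htH 1 one_pos (by norm_num) ({3},{2},{2})
        (mem_T231 _ (by refine ⟨?_,?_,?_,?_,?_,?_,?_⟩ <;> decide))
      simp only [Finset.sum_singleton] at h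
      rw [eI 3 (by norm_num), eJ 2 (by norm_num), eK 2 (by norm_num), E3_3, E3_2, E3_2] at h
      clear * - h hn; omega
    have hB1 : 4 * n + 1 ≤ i1 + i3 + (j1 + j3) + (k2 + k3) := by
      have h := htH 2 (by norm_num) (by norm_num) ({1,3},{1,3},{2,3}) memB1
      rw [Finset.sum_pair (show (1:ℕ) ≠ 3 by norm_num),
        Finset.sum_pair (show (1:ℕ) ≠ 3 by norm_num),
        Finset.sum_pair (show (2:ℕ) ≠ 3 by norm_num)] at h
      rw [eI 1 (by norm_num), eI 3 (by norm_num), eJ 1 (by norm_num), eJ 3 (by norm_num),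
        eK 2 (by norm_num), eK 3 (by norm_num), E3_1, E3_3, E3_1, E3_3, E3_2, E3_3] at h
      clear * - h hn; omega
    have hB2 : 4 * n + 1 ≤ i1 + i3 + (j2 + j3) + (k1 + k3) := by
      have h := htH 2 (by norm_num) (by norm_num) ({1,3},{2,3},{1,3}) memB2
      rw [Finset.sum_pair (show (1:ℕ) ≠ 3 by norm_num),
        Finset.sum_pair (show (2:ℕ) ≠ 3 by norm_num),
        Finset.sum_pair (show (1:ℕ) ≠ 3 by norm_num)] at h
      rw [eI 1 (by norm_num), eI 3 (by norm_num), eJ 2 (by norm_num), eJ 3 (by norm_num),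
        eK 1 (by norm_num), eK 3 (by norm_num), E3_1, E3_3, E3_2, E3_3, E3_1, E3_3] at h
      clear * - h hn; omega
    have hB3 : 4 * n + 1 ≤ i2 + i3 + (j1 + j3) + (k1 + k3) := by
      have h := htH 2 (by norm_num) (by norm_num) ({2,3},{1,3},{1,3}) memB3
      rw [Finset.sum_pair (show (2:ℕ) ≠ 3 by norm_num),
        Finset.sum_pair (show (1:ℕ) ≠ 3 by norm_num),
        Finset.sum_pair (show (1:ℕ) ≠ 3 by norm_num)] at h
      rw [eI 2 (by norm_num), eI 3 (by norm_num), eJ 1 (by norm_num), eJ 3 (by norm_num),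
        eK 1 (by norm_num), eK 3 (by norm_num), E3_2, E3_3, E3_1, E3_3, E3_1, E3_3] at h
      clear * - h hn; omega
    have hredE : ∀ u v w : ℕ, u ≤ 3 → v ≤ 3 → w ≤ 3 → u + v + w = 3 →
        (u = 3 ∨ E3 i1 i2 i3 u + 2 ≤ E3 i1 i2 i3 (u + 1)) →
        (v = 3 ∨ E3 j1 j2 j3 v + 2 ≤ E3 j1 j2 j3 (v + 1)) →
        (w = 3 ∨ E3 k1 k2 k3 w + 2 ≤ E3 k1 k2 k3 (w + 1)) →
        E3 i1 i2 i3 u + E3 j1 j2 j3 v + E3 k1 k2 k3 w ≤ n - 1 → False := by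
      intro u v w h1 h2 h3 h4 g1 g2 g3 gs
      refine hirr ⟨u, v, w, h1, h2, h3, h4, ?_, ?_, ?_, ?_⟩
      · rcases g1 with h | h
        · exact Or.inl h
        · exact Or.inr (by rw [eI u (by omega), eI (u+1) (by omega)]; exact h)
      · rcases g2 with h | h
        · exact Or.inl h
        · exact Or.inr (by rw [eJ v (by omega), eJ (v+1) (by omega)]; exact h)
      · rcases g3 with h | h
        · exact Or.inl h
        · exact Or.inr (by rw [eK w (by omega), eK (w+1) (by omega)]; exact h)
      · rw [eI u (by omega), eJ v (by omega), eK w (by omega)]; exact gs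
    obtain ⟨m, l, hml1, hml2, hml3, e1, e2, e3, e4, e5, e6, e7, e8, e9⟩ :=
      forward_arith n i1 i2 i3 j1 j2 j3 k1 k2 k3 hn hi12 hi23 hj12 hj23 hk12 hk23
        bi1.1 bi3.2 bj1.1 bj3.2 bk1.1 bk3.2 hS hC1 hC2 hC3 hC4 hC5 hC6 hB1 hB2 hB3 hredE
    exact ⟨m, l, hml1, hml2, hml3,
      by rw [hIeq, e1, e2, e3], by rw [hJeq, e4, e5, e6], by rw [hKeq, e7, e8, e9]⟩
  · -- explicit form → irreducible
    rintro ⟨m, l, hl1, hlm, hml, hIe, hJe, hKe⟩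
      ⟨u, v, w, hu, hv, hw, huvw, g1, g2, g3, gs⟩
    clear * - hn hl1 hlm hml hIe hJe hKe hu hv hw huvw g1 g2 g3 gs
    have h1 : m < m + l := by omega
    have h2 : m + l < n := by omega
    have hphi : ∀ p : ℕ, p ≤ 3 → elem ({m, m + l, n} : Finset ℕ) p =
        if p = 0 then 0 else if p = 1 then m else if p = 2 then m + l else n := by
      intro p hp
      interval_cases p
      · rfl
      · simpa using elem_t1 h1 h2
      · simpa using elem_t2 h1 h2
      · simpa using elem_t3 h1 h2
    rw [hIe] at g1 gs
    rw [hJe] at g2 gs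
    rw [hKe] at g3 gs
    have gu : u ≠ 1 ∨ 2 ≤ l := by
      by_cases hu1 : u = 1
      · subst hu1
        rcases g1 with h | h
        · omega
        · rw [hphi 1 (by omega), hphi 2 (by omega)] at h
          simp at h; omega
      · exact Or.inl hu1
    rw [hphi u (by omega), hphi v (by omega), hphi w (by omega)] at gs
    split_ifs at gs <;> omega
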